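/- arXiv:1602.01033 — 3 statements merged into one kernel-verified Lean document; each statement's English description precedes it below -/
import Mathlib

section
/- If G is a graph of order n such that d(u) + d(v) ≥ n for every pair of distinct nonadjacent vertices u and v, then G has a Hamiltonian cycle. -/
open SimpleGraph Finset

/-- Spectral radius (largest adjacency eigenvalue) of a graph on `Fin n`. -/
noncomputable def specRad {n : ℕ} (G : SimpleGraph (Fin n)) : ℝ :=
  haveI := Classical.decRel G.Adj
  ⨆ i, (Matrix.IsHermitian.eigenvalues
    (by
      rw [Matrix.IsHermitian, Matrix.conjTranspose_eq_transpose_of_trivial]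
      exact G.isSymm_adjMatrix : (G.adjMatrix ℝ).IsHermitian)) i

/-- `M_k(n) = K_k ∨ (K_{n-2k} + K̄_k)`: vertices `0..k-1` are the independent set,
vertices `k..2k-1` their joint neighborhood, vertices `k..n-1` a clique. -/
def Mgraph (k n : ℕ) : SimpleGraph (Fin n) where
  Adj i j := i ≠ j ∧ ((k ≤ i.val ∧ k ≤ j.val) ∨
    (i.val < k ∧ k ≤ j.val ∧ j.val < 2 * k) ∨ (j.val < k ∧ k ≤ i.val ∧ i.val < 2 * k))
  symm := ⟨by intro i j h; exact ⟨h.1.symm, by tauto⟩⟩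
  loopless := ⟨by intro i h; exact h.1 rfl⟩

instance (k n : ℕ) : DecidableRel (Mgraph k n).Adj := fun _ _ => instDecidableAnd

/-- `L_k(n) = K_1 ∨ (K_{n-k-1} + K_k)`: a `K_{k+1}` on vertices `0..k` and a
`K_{n-k}` on vertices `k..n-1`, sharing the vertex `k`. -/
def Lgraph (k n : ℕ) : SimpleGraph (Fin n) where
  Adj i j := i ≠ j ∧ ((i.val ≤ k ∧ j.val ≤ k) ∨ (k ≤ i.val ∧ k ≤ j.val))
  symm := ⟨by intro i j h; exact ⟨h.1.symm, by tauto⟩⟩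
  loopless := ⟨by intro i h; exact h.1 rfl⟩

instance (k n : ℕ) : DecidableRel (Lgraph k n).Adj := fun _ _ => instDecidableAnd

/-- `N_k(n) = K_k ∨ (K_{n-2k-1} + K̄_{k+1})`: vertices `0..k` are the independent set,
vertices `k+1..2k` their joint neighborhood, vertices `k+1..n-1` a clique. -/
def Ngraph (k n : ℕ) : SimpleGraph (Fin n) where
  Adj i j := i ≠ j ∧ ((k + 1 ≤ i.val ∧ k + 1 ≤ j.val) ∨
    (i.val < k + 1 ∧ k + 1 ≤ j.val ∧ j.val < 2 * k + 1) ∨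
    (j.val < k + 1 ∧ k + 1 ≤ i.val ∧ i.val < 2 * k + 1))
  symm := ⟨by intro i j h; exact ⟨h.1.symm, by tauto⟩⟩
  loopless := ⟨by intro i h; exact h.1 rfl⟩

instance (k n : ℕ) : DecidableRel (Ngraph k n).Adj := fun _ _ => instDecidableAnd

/-- The disjoint union `K_a + K_{n-a}` on `Fin n`: vertices `0..a-1` form one clique,
vertices `a..n-1` the other. -/
def DUgraph (a n : ℕ) : SimpleGraph (Fin n) where
  Adj i j := i ≠ j ∧ ((i.val < a ∧ j.val < a) ∨ (a ≤ i.val ∧ a ≤ j.val))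
  symm := ⟨by intro i j h; exact ⟨h.1.symm, by tauto⟩⟩
  loopless := ⟨by intro i h; exact h.1 rfl⟩

instance (a n : ℕ) : DecidableRel (DUgraph a n).Adj := fun _ _ => instDecidableAnd

/-- `G` has a Hamiltonian path. -/
def HasHamiltonianPath {V : Type*} [DecidableEq V] (G : SimpleGraph V) : Prop :=
  ∃ (u v : V) (p : G.Walk u v), p.IsHamiltonian

/-- `G` is Hamiltonian-connected. -/
def HamiltonianConnected {V : Type*} [DecidableEq V] (G : SimpleGraph V) : Prop :=
  ∀ u v : V, u ≠ v → ∃ p : G.Walk u v, p.IsHamiltonian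


namespace OreProof
open SimpleGraph Walk
variable {V : Type*}


/-- In a path, an edge containing the first vertex must be the first edge. -/
lemma first_edge {G : SimpleGraph V} {v u c : V} (p : G.Walk v u) (hp : p.IsPath)
    (he : s(v, c) ∈ p.edges) : ∃ (h : G.Adj v c) (r : G.Walk c u), p = Walk.cons h r := by
  cases p with
  | nil => simp at he
  | @cons _ b _ h' r =>
    rw [Walk.edges_cons, List.mem_cons] at he
    rcases he with he | he
    · rw [Sym2.eq_iff] at he
      rcases he with ⟨-, rfl⟩ | ⟨hvb, -⟩
      · exact ⟨h', r, rfl⟩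
      · exact absurd hvb h'.ne
    · exact absurd (Walk.fst_mem_support_of_mem_edges r he)
        ((Walk.cons_isPath_iff _ _).mp hp).2

/-- In a path, an edge containing the last vertex must be the last edge. -/
lemma last_edge {G : SimpleGraph V} {b u c : V} (p : G.Walk b u) (hp : p.IsPath)
    (he : s(u, c) ∈ p.edges) : ∃ (r : G.Walk b c) (h : G.Adj c u), p = r.concat h := by
  have he' : s(u, c) ∈ p.reverse.edges := by
    rw [Walk.edges_reverse, List.mem_reverse]; exact he
  obtain ⟨h, r, hr⟩ := first_edge p.reverse hp.reverse he'
  refine ⟨r.reverse, h.symm, ?_⟩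
  have := congrArg Walk.reverse hr
  rwa [Walk.reverse_reverse, Walk.reverse_cons] at this


/-- Close a hamiltonian path into a hamiltonian cycle using an edge between its endpoints. -/
lemma close_path [Fintype V] [DecidableEq V] {G : SimpleGraph V} {u v : V}
    (hcard : 3 ≤ Fintype.card V) (p : G.Walk v u) (hp : p.IsPath) (hham : p.IsHamiltonian)
    (h : G.Adj u v) : G.IsHamiltonian := by
  have hlen : p.length = Fintype.card V - 1 := hham.length_eq
  have hne : s(u, v) ∉ p.edges := by
    intro he
    have he' : s(v, u) ∈ p.edges := by rwa [Sym2.eq_swap]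
    obtain ⟨h', r, rfl⟩ := first_edge p hp he'
    have hrp : r.IsPath := ((Walk.cons_isPath_iff _ _).mp hp).1
    have : r = Walk.nil := by
      have := SimpleGraph.Path.loop_eq (⟨r, hrp⟩ : G.Path u u)
      simpa using congrArg Subtype.val this
    subst this
    simp only [Walk.length_cons, Walk.length_nil] at hlen
    omega
  have hcyc : (Walk.cons h p).IsCycle := (Walk.cons_isCycle_iff p h).mpr ⟨hp, hne⟩
  intro _
  refine ⟨u, Walk.cons h p, hcyc, ?_⟩
  intro w
  rw [Walk.support_tail_of_not_nil _ Walk.not_nil_cons, Walk.support_cons, List.tail_cons]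
  exact hham w

lemma getVert_eq_getElem {G : SimpleGraph V} {u v : V} (p : G.Walk u v) :
    ∀ (i : ℕ) (h : i < p.length + 1),
    p.getVert i = p.support[i]'(by rw [Walk.length_support]; exact h) := by
  induction p with
  | nil =>
    rintro (_ | i) h
    · simp
    · exact absurd h (by simp)
  | cons h' q ih =>
    rintro (_ | i) h
    · simp
    · have := ih i (by simpa [Nat.succ_lt_succ_iff] using h)
      simp only [Walk.getVert_cons_succ, Walk.support_cons, List.getElem_cons_succ]
      exact this

lemma getVert_injOn {G : SimpleGraph V} {u v : V} {p : G.Walk u v} (hp : p.IsPath) {i j : ℕ}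
    (hi : i ≤ p.length) (hj : j ≤ p.length) (h : p.getVert i = p.getVert j) : i = j := by
  rw [getVert_eq_getElem p i (by omega), getVert_eq_getElem p j (by omega)] at h
  exact (hp.support_nodup.getElem_inj_iff).mp h

/-- Split a walk at position `i`. -/
lemma split_at {G : SimpleGraph V} {u v : V} (p : G.Walk u v) :
    ∀ i, i < p.length → ∃ (x y : V) (hxy : G.Adj x y) (t : G.Walk u x) (d : G.Walk y v),
      p = t.append (Walk.cons hxy d) ∧ t.length = i := by
  induction p with
  | nil => intro i hi; simp at hi
  | @cons a b c h q ih =>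
    rintro (_ | i) hi
    · exact ⟨a, b, h, Walk.nil, q, by simp, rfl⟩
    · obtain ⟨x, y, hxy, t, d, hq, hl⟩ := ih i (by simpa [Nat.succ_lt_succ_iff] using hi)
      exact ⟨x, y, hxy, Walk.cons h t, d, by rw [Walk.cons_append, ← hq], by simp [hl]⟩

lemma getVert_append_mid {G : SimpleGraph V} {u x v : V} (t : G.Walk u x) (q : G.Walk x v) :
    (t.append q).getVert t.length = x := by
  rw [Walk.getVert_append]
  simp

lemma getVert_append_mid1 {G : SimpleGraph V} {u x v : V} (t : G.Walk u x) (q : G.Walk x v) :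
    (t.append q).getVert (t.length + 1) = q.getVert 1 := by
  rw [Walk.getVert_append]
  simp


/-- The rotation (crossing) lemma: a hamiltonian `u`–`v` path together with
`deg u + deg v ≥ n` yields a hamiltonian cycle. -/
lemma ore_rotate [Fintype V] [DecidableEq V] {G : SimpleGraph V} [DecidableRel G.Adj]
    {u v : V} (hcard : 3 ≤ Fintype.card V)
    (hdeg : Fintype.card V ≤ G.degree u + G.degree v)
    (p : G.Walk u v) (hham : p.IsHamiltonian) : G.IsHamiltonian := by
  classical
  have hp : p.IsPath := hham.isPath
  have hlen : p.length = Fintype.card V - 1 := hham.length_eq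
  set L := p.length with hL
  -- index sets
  set S : Finset ℕ := (Finset.range L).filter (fun i => G.Adj u (p.getVert (i + 1))) with hS
  set T : Finset ℕ := (Finset.range L).filter (fun i => G.Adj v (p.getVert i)) with hT
  have hScard : S.card = G.degree u := by
    rw [SimpleGraph.degree]
    apply Finset.card_bij (fun i _ => p.getVert (i + 1))
    · intro a ha
      rw [hS, Finset.mem_filter] at ha
      rw [SimpleGraph.mem_neighborFinset]
      exact ha.2
    · intro a ha b hb hab
      rw [hS, Finset.mem_filter, Finset.mem_range] at ha hb
      have := getVert_injOn hp (i := a+1) (j := b+1) (by omega) (by omega) hab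
      omega
    · intro w hw
      rw [SimpleGraph.mem_neighborFinset] at hw
      have hwmem : w ∈ p.support := hham.mem_support w
      rw [Walk.mem_support_iff_exists_getVert] at hwmem
      obtain ⟨j, hj, hjL⟩ := hwmem
      have hj0 : j ≠ 0 := by
        intro h0; subst h0; rw [Walk.getVert_zero] at hj; exact hw.ne hj
      obtain ⟨i, rfl⟩ := Nat.exists_eq_succ_of_ne_zero hj0
      refine ⟨i, ?_, hj⟩
      rw [hS, Finset.mem_filter, Finset.mem_range]
      exact ⟨by omega, hj ▸ hw⟩
  have hTcard : T.card = G.degree v := by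
    rw [SimpleGraph.degree]
    apply Finset.card_bij (fun i _ => p.getVert i)
    · intro a ha
      rw [hT, Finset.mem_filter] at ha
      rw [SimpleGraph.mem_neighborFinset]
      exact ha.2
    · intro a ha b hb hab
      rw [hT, Finset.mem_filter, Finset.mem_range] at ha hb
      exact getVert_injOn hp (by omega) (by omega) hab
    · intro w hw
      rw [SimpleGraph.mem_neighborFinset] at hw
      have hwmem : w ∈ p.support := hham.mem_support w
      rw [Walk.mem_support_iff_exists_getVert] at hwmem
      obtain ⟨j, hj, hjL⟩ := hwmem
      have hjL' : j ≠ L := by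
        intro h0; subst h0; rw [hL, Walk.getVert_length] at hj
        exact hw.ne hj
      refine ⟨j, ?_, hj⟩
      rw [hT, Finset.mem_filter, Finset.mem_range]
      exact ⟨by omega, hj ▸ hw⟩
  -- pigeonhole
  have hunion : (S ∪ T).card ≤ L := by
    have : S ∪ T ⊆ Finset.range L := by
      rw [hS, hT]
      exact Finset.union_subset (Finset.filter_subset _ _) (Finset.filter_subset _ _)
    simpa using Finset.card_le_card this
  have hint : (S ∩ T).Nonempty := by
    rw [← Finset.card_pos]
    have h1 := Finset.card_union_add_card_inter S T
    have h2 : Fintype.card V ≤ S.card + T.card := by rw [hScard, hTcard]; exact hdeg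
    omega
  obtain ⟨i, hi⟩ := hint
  rw [Finset.mem_inter, hS, hT, Finset.mem_filter, Finset.mem_filter, Finset.mem_range] at hi
  obtain ⟨⟨hiL, hiu⟩, -, hiv⟩ := hi
  -- split the path
  obtain ⟨x, y, hxy, t, d, hpeq, htl⟩ := split_at p i hiL
  have hx : p.getVert i = x := by rw [hpeq, ← htl]; exact getVert_append_mid t _
  have hy : p.getVert (i + 1) = y := by
    rw [hpeq, ← htl, getVert_append_mid1 t _]
    rw [Walk.getVert_cons_succ, Walk.getVert_zero]
  rw [hx] at hiv
  rw [hy] at hiu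
  -- build the rotated hamiltonian path from y to u
  have q : G.Walk y u := d.append (Walk.cons hiv t.reverse)
  have hqsupp : (d.append (Walk.cons hiv t.reverse)).support = d.support ++ t.reverse.support := by
    rw [Walk.support_append, Walk.support_cons, List.tail_cons]
  have hperm : (d.append (Walk.cons hiv t.reverse)).support.Perm p.support := by
    rw [hqsupp, hpeq, Walk.support_append, Walk.support_cons, List.tail_cons,
      Walk.support_reverse]
    exact (List.perm_append_comm).trans ((List.reverse_perm t.support).append_right d.support)
  have hqpath : (d.append (Walk.cons hiv t.reverse)).IsPath :=
    Walk.IsPath.mk' (hperm.nodup_iff.mpr hp.support_nodup)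
  have hqham : (d.append (Walk.cons hiv t.reverse)).IsHamiltonian :=
    hqpath.isHamiltonian_of_mem fun w => hperm.mem_iff.mpr (hham.mem_support w)
  exact close_path hcard _ hqpath hqham hiu


/-- From a hamiltonian cycle based at `u` through the edge `uv`, extract a hamiltonian
`v`–`u` path avoiding the edge `uv`. -/
lemma ham_path_of_cycle_edge [Fintype V] [DecidableEq V] {G : SimpleGraph V} {u v : V}
    (c : G.Walk u u) (hc : c.IsHamiltonianCycle) (he : s(u, v) ∈ c.edges) (huv : u ≠ v) :
    ∃ q : G.Walk v u, q.IsPath ∧ q.IsHamiltonian ∧ s(u, v) ∉ q.edges := by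
  cases c with
  | nil => simp at he
  | @cons _ b _ h q =>
    obtain ⟨hqp, hne⟩ := (Walk.cons_isCycle_iff q h).mp hc.isCycle
    have hqham : q.IsHamiltonian := by
      have ht := hc.isHamiltonian_tail
      intro w
      have := ht w
      rwa [Walk.support_tail_of_not_nil _ Walk.not_nil_cons, Walk.support_cons,
        List.tail_cons] at this
    rw [Walk.edges_cons, List.mem_cons] at he
    by_cases hvb : v = b
    · subst hvb
      exact ⟨q, hqp, hqham, hne⟩
    · have he' : s(u, v) ∈ q.edges := by
        rcases he with he | he
        · rw [Sym2.eq_iff] at he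
          rcases he with ⟨-, h1⟩ | ⟨h1, -⟩
          · exact absurd h1 hvb
          · exact absurd h1 h.ne
        · exact he
      obtain ⟨r, h', hq⟩ := last_edge q hqp he'
      subst hq
      -- new path : r.reverse.concat h.symm : Walk v u
      have hsupp : (r.reverse.concat h.symm).support = r.support.reverse ++ [u] := by
        rw [Walk.support_concat, Walk.support_reverse]
      have hqsupp : (r.concat h').support = r.support ++ [u] := by
        rw [Walk.support_concat]
      have hperm : (r.reverse.concat h.symm).support.Perm (r.concat h').support := by
        rw [hsupp, hqsupp]
        exact ((List.reverse_perm r.support).append_right [u])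
      have hpath : (r.reverse.concat h.symm).IsPath :=
        Walk.IsPath.mk' (hperm.nodup_iff.mpr hqp.support_nodup)
      have hham' : (r.reverse.concat h.symm).IsHamiltonian :=
        hpath.isHamiltonian_of_mem fun w => hperm.mem_iff.mpr (hqham.mem_support w)
      refine ⟨r.reverse.concat h.symm, hpath, hham', ?_⟩
      intro hmem
      rw [Walk.edges_concat, List.concat_eq_append, List.mem_append] at hmem
      rcases hmem with hmem | hmem
      · rw [Walk.edges_reverse, List.mem_reverse] at hmem
        have hu : u ∈ r.support := Walk.fst_mem_support_of_mem_edges r hmem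
        have : u ∉ r.support := by
          have hnd := hqp.support_nodup
          rw [hqsupp] at hnd
          have := List.disjoint_of_nodup_append hnd
          intro hu'
          exact this hu' (by simp)
        exact this hu
      · simp only [List.mem_singleton, Sym2.eq_iff] at hmem
        rcases hmem with ⟨h1, -⟩ | ⟨-, h2⟩
        · exact h.ne h1
        · exact hvb h2

/-- A hamiltonian cycle can be rotated to any starting vertex. -/
lemma ham_cycle_rotate [Fintype V] [DecidableEq V] {G : SimpleGraph V} {a u : V}
    (c : G.Walk a a) (hc : c.IsHamiltonianCycle) (hu : u ∈ c.support) :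
    (c.rotate u hu).IsHamiltonianCycle := by
  rw [Walk.isHamiltonianCycle_iff_isCycle_and_support_count_tail_eq_one] at hc ⊢
  refine ⟨hc.1.rotate hu, fun w => ?_⟩
  rw [(Walk.support_rotate c u hu).perm.count_eq]
  exact hc.2 w


/-- Build a path through a given nodup list in a graph where all listed vertices are adjacent. -/
lemma path_from_list {G : SimpleGraph V} (hadj : ∀ a b : V, a ≠ b → G.Adj a b) :
    ∀ (l : List V), l.Nodup → ∀ (hl : l ≠ []),
      ∃ (b : V) (p : G.Walk (l.head hl) b), p.support = l := by
  intro l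
  induction l with
  | nil => intro _ hl; exact absurd rfl hl
  | cons x l ih =>
    intro hnd _
    cases l with
    | nil => exact ⟨x, Walk.nil, by simp⟩
    | cons y t =>
      obtain ⟨b, p, hp⟩ := ih (List.nodup_cons.mp hnd).2 (by simp)
      have hxy : x ≠ y := by
        intro h; subst h; exact (List.nodup_cons.mp hnd).1 (by simp)
      exact ⟨b, Walk.cons (hadj x y hxy) p, by show x :: p.support = _; rw [hp]⟩

lemma complete_ham [Fintype V] [DecidableEq V] {G : SimpleGraph V}
    (hcard : 3 ≤ Fintype.card V) (hadj : ∀ a b : V, a ≠ b → G.Adj a b) : G.IsHamiltonian := by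
  have hne : (Finset.univ : Finset V).toList ≠ [] := by
    intro h
    have hl := Finset.length_toList (Finset.univ : Finset V)
    rw [h] at hl
    simp [Finset.card_univ] at hl
    omega
  obtain ⟨b, p, hp⟩ := path_from_list hadj _ (Finset.univ : Finset V).nodup_toList hne
  have hpath : p.IsPath := Walk.IsPath.mk' (by rw [hp]; exact Finset.nodup_toList _)
  have hham : p.IsHamiltonian := hpath.isHamiltonian_of_mem fun w => by
    rw [hp]; simp [Finset.mem_toList]
  have hab : ((Finset.univ : Finset V).toList.head hne) ≠ b := by
    intro h
    have hp' : (p.copy rfl h.symm).IsPath := by rwa [Walk.isPath_copy]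
    have hnil : (p.copy rfl h.symm) = Walk.nil := by
      simpa using congrArg Subtype.val
        (SimpleGraph.Path.loop_eq (⟨p.copy rfl h.symm, hp'⟩ : G.Path _ _))
    have hlen0 : p.length = 0 := by
      have := congrArg Walk.length hnil
      rwa [Walk.length_copy, Walk.length_nil] at this
    have hlen := hham.length_eq
    omega
  exact close_path hcard p hpath hham (hadj b _ (Ne.symm hab))


lemma degree_mono [Fintype V] {G H : SimpleGraph V} [DecidableRel G.Adj] [DecidableRel H.Adj]
    (hle : G ≤ H) (w : V) : G.degree w ≤ H.degree w := by
  apply Finset.card_le_card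
  intro x hx
  rw [SimpleGraph.mem_neighborFinset] at hx ⊢
  exact hle hx

lemma ham_cycle_transfer [Fintype V] [DecidableEq V] {G H : SimpleGraph V} {a : V}
    {c : G.Walk a a} (hc : c.IsHamiltonianCycle) (hsub : ∀ e ∈ c.edges, e ∈ H.edgeSet) :
    H.IsHamiltonian := by
  intro _
  refine ⟨a, c.transfer H hsub, ?_⟩
  rw [Walk.isHamiltonianCycle_iff_isCycle_and_support_count_tail_eq_one] at hc ⊢
  refine ⟨hc.1.transfer hsub, fun w => ?_⟩
  rw [Walk.support_transfer]
  exact hc.2 w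

lemma ore_aux (m : ℕ) : ∀ {V : Type} [Fintype V] [DecidableEq V] (G : SimpleGraph V)
    [DecidableRel G.Adj], Gᶜ.edgeSet.ncard ≤ m → 3 ≤ Fintype.card V →
    (∀ u v : V, u ≠ v → ¬G.Adj u v → Fintype.card V ≤ G.degree u + G.degree v) →
    G.IsHamiltonian := by
  induction m with
  | zero =>
    intro V _ _ G _ hm hcard hore
    refine complete_ham hcard fun a b hab => ?_
    by_contra hadj
    have hmem : s(a, b) ∈ Gᶜ.edgeSet := by
      rw [SimpleGraph.mem_edgeSet, SimpleGraph.compl_adj]; exact ⟨hab, hadj⟩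
    have hpos : 0 < Gᶜ.edgeSet.ncard := (Set.ncard_pos (Set.toFinite _)).mpr ⟨_, hmem⟩
    omega
  | succ m ih =>
    intro V _ _ G _ hm hcard hore
    by_cases hcomp : ∀ a b : V, a ≠ b → G.Adj a b
    · exact complete_ham hcard hcomp
    push_neg at hcomp
    obtain ⟨u, v, huv, hadj⟩ := hcomp
    set H := G ⊔ SimpleGraph.edge u v with hH
    haveI : DecidableRel H.Adj := Classical.decRel _
    have hGH : G ≤ H := le_sup_left
    have hHadj : H.Adj u v := by
      rw [hH, SimpleGraph.sup_adj]
      exact Or.inr ((SimpleGraph.edge_adj u v u v).mpr ⟨Or.inl ⟨rfl, rfl⟩, huv⟩)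
    have hsubset : Hᶜ.edgeSet ⊆ Gᶜ.edgeSet := by
      rw [SimpleGraph.edgeSet_subset_edgeSet]
      intro a b hab
      rw [SimpleGraph.compl_adj] at hab ⊢
      exact ⟨hab.1, fun h' => hab.2 (hGH h')⟩
    have hssub : Hᶜ.edgeSet ⊂ Gᶜ.edgeSet := by
      refine (Set.ssubset_iff_of_subset hsubset).mpr ⟨s(u, v), ?_, ?_⟩
      · rw [SimpleGraph.mem_edgeSet, SimpleGraph.compl_adj]; exact ⟨huv, hadj⟩
      · rw [SimpleGraph.mem_edgeSet, SimpleGraph.compl_adj]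
        rintro ⟨-, hn⟩; exact hn hHadj
    have hm' : Hᶜ.edgeSet.ncard ≤ m := by
      have := Set.ncard_lt_ncard hssub (Set.toFinite _)
      omega
    have hHore : ∀ a b : V, a ≠ b → ¬H.Adj a b → Fintype.card V ≤ H.degree a + H.degree b := by
      intro a b hab hnadj
      have hg : ¬G.Adj a b := fun h' => hnadj (hGH h')
      calc Fintype.card V ≤ G.degree a + G.degree b := hore a b hab hg
        _ ≤ H.degree a + H.degree b := Nat.add_le_add (degree_mono hGH a) (degree_mono hGH b)
    obtain ⟨a, c, hcyc⟩ := ih H hm' hcard hHore (by omega)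
    by_cases hec : s(u, v) ∈ c.edges
    · have hu : u ∈ c.support := hcyc.mem_support u
      have hc' := ham_cycle_rotate c hcyc hu
      have hec' : s(u, v) ∈ (c.rotate u hu).edges :=
        ((Walk.rotate_edges c u hu).perm.mem_iff).mpr hec
      obtain ⟨q, hqp, hqham, hqe⟩ := ham_path_of_cycle_edge (c.rotate u hu) hc' hec' huv
      have hsub : ∀ e ∈ q.edges, e ∈ G.edgeSet := by
        intro e he
        have heH : e ∈ H.edgeSet := q.edges_subset_edgeSet he
        rw [hH, SimpleGraph.edgeSet_sup] at heH
        rcases heH with heH | heH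
        · exact heH
        · rw [SimpleGraph.edge_edgeSet_of_ne huv, Set.mem_singleton_iff] at heH
          subst heH
          exact absurd he hqe
      have hq'path : (q.transfer G hsub).IsPath := hqp.transfer hsub
      have hq'ham : (q.transfer G hsub).IsHamiltonian := by
        intro w
        rw [Walk.support_transfer]
        exact hqham w
      exact ore_rotate hcard (by rw [Nat.add_comm]; exact hore u v huv hadj)
        (q.transfer G hsub) hq'ham
    · refine ham_cycle_transfer hcyc ?_
      intro e he
      have heH : e ∈ H.edgeSet := c.edges_subset_edgeSet he
      rw [hH, SimpleGraph.edgeSet_sup] at heH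
      rcases heH with heH | heH
      · exact heH
      · rw [SimpleGraph.edge_edgeSet_of_ne huv, Set.mem_singleton_iff] at heH
        subst heH
        exact absurd he hec


end OreProof

/-- Ore's theorem: if `d(u) + d(v) ≥ n` for all distinct nonadjacent `u, v`,
then `G` has a Hamiltonian cycle. -/
theorem stmt_2 (n : ℕ) (hn : 3 ≤ n) (G : SimpleGraph (Fin n)) [DecidableRel G.Adj]
    (h : ∀ u v : Fin n, u ≠ v → ¬ G.Adj u v → n ≤ G.degree u + G.degree v) :
    G.IsHamiltonian := by
  refine OreProof.ore_aux (Gᶜ.edgeSet.ncard) G le_rfl ?_ ?_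
  · rw [Fintype.card_fin]; exact hn
  · intro u v huv hadj
    rw [Fintype.card_fin]
    exact h u v huv hadj
end

section
/- If k ≥ 2 and 2k+1 ≤ n ≤ k³/2 + k + 1, then there exists a graph G of order n with minimum degree δ(G) ≥ k such that G is a proper spanning subgraph of M_k(n) and λ(G) > n - k - 1. -/
open SimpleGraph Finset

namespace Stmt15Aux
open SimpleGraph Finset Matrix


lemma rayleigh {n : ℕ} (A : Matrix (Fin n) (Fin n) ℝ) (hA : A.IsHermitian) (x : Fin n → ℝ) :
    x ⬝ᵥ (A *ᵥ x) ≤ (⨆ i, hA.eigenvalues i) * (x ⬝ᵥ x) := by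
  rcases Nat.eq_zero_or_pos n with h0 | hpos
  · subst h0; simp [dotProduct]
  haveI : Nonempty (Fin n) := ⟨⟨0, hpos⟩⟩
  set U : Matrix (Fin n) (Fin n) ℝ := (hA.eigenvectorUnitary : Matrix (Fin n) (Fin n) ℝ) with hU
  have hT : star U = Uᵀ := by
    rw [star_eq_conjTranspose, Matrix.conjTranspose_eq_transpose_of_trivial]
  have hUU : U * Uᵀ = 1 := by
    rw [← hT]; exact (Matrix.mem_unitaryGroup_iff).mp hA.eigenvectorUnitary.2
  set y : Fin n → ℝ := Uᵀ *ᵥ x with hy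
  have hyy : y ⬝ᵥ y = x ⬝ᵥ x := by
    rw [hy, dotProduct_mulVec, vecMul_transpose, mulVec_mulVec, hUU, one_mulVec]
  have hform : x ⬝ᵥ (A *ᵥ x) = ∑ i, hA.eigenvalues i * (y i)^2 := by
    conv_lhs => rw [hA.spectral_theorem, Unitary.conjStarAlgAut_apply]
    rw [hT, ← mulVec_mulVec, ← mulVec_mulVec, dotProduct_mulVec]
    rw [← Matrix.mulVec_transpose]
    simp [mulVec_diagonal, dotProduct, mul_comm, sq, mul_assoc, mul_left_comm]
    rfl
  have hbdd : BddAbove (Set.range hA.eigenvalues) := Set.Finite.bddAbove (Set.finite_range _)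
  calc x ⬝ᵥ (A *ᵥ x) = ∑ i, hA.eigenvalues i * (y i)^2 := hform
    _ ≤ ∑ i, (⨆ i, hA.eigenvalues i) * (y i)^2 := by
        apply Finset.sum_le_sum
        intro i _
        exact mul_le_mul_of_nonneg_right (le_ciSup hbdd i) (sq_nonneg _)
    _ = (⨆ i, hA.eigenvalues i) * (y ⬝ᵥ y) := by
        rw [← Finset.mul_sum]; congr 1; simp [dotProduct, sq]
    _ = _ := by rw [hyy]


lemma sum_const_Ico {a b : ℕ} (g : ℕ → ℝ) (c : ℝ) (H : ∀ j, a ≤ j → j < b → g j = c) :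
    ∑ j ∈ Ico a b, g j = ((b - a : ℕ) : ℝ) * c := by
  rw [Finset.sum_congr rfl (fun j hj => H j (mem_Ico.mp hj).1 (mem_Ico.mp hj).2),
    Finset.sum_const, Nat.card_Ico, nsmul_eq_mul]

lemma sum_range_split3 {n a b : ℕ} (h1 : a ≤ b) (h2 : b ≤ n) (g : ℕ → ℝ) (c1 c2 c3 : ℝ)
    (H1 : ∀ j, j < a → g j = c1) (H2 : ∀ j, a ≤ j → j < b → g j = c2)
    (H3 : ∀ j, b ≤ j → j < n → g j = c3) :
    ∑ j ∈ range n, g j = (a : ℝ) * c1 + ((b - a : ℕ) : ℝ) * c2 + ((n - b : ℕ) : ℝ) * c3 := by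
  rw [range_eq_Ico, ← Finset.sum_Ico_consecutive _ (Nat.zero_le a) (le_trans h1 h2),
    ← Finset.sum_Ico_consecutive _ h1 h2,
    sum_const_Ico g c1 (fun j _ hj => H1 j hj),
    sum_const_Ico g c2 H2, sum_const_Ico g c3 (fun j hj hj' => H3 j hj hj')]
  rw [Nat.sub_zero]; ring


lemma ite_or_add {P Q : Prop} [Decidable P] [Decidable Q] (h : ¬(P ∧ Q)) (v : ℝ) :
    (if P ∨ Q then v else 0) = (if P then v else 0) + (if Q then v else 0) := by
  by_cases hP : P <;> by_cases hQ : Q <;> simp_all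

lemma sum_ite_and_mul {α : Type*} [Fintype α] (p q : α → Prop) [DecidablePred p]
    [DecidablePred q] (x : α → ℝ) :
    ∑ i : α, ∑ j : α, (if p i ∧ q j then x i * x j else 0)
      = (∑ i : α, if p i then x i else 0) * (∑ j : α, if q j then x j else 0) := by
  rw [Finset.sum_mul_sum]
  refine Finset.sum_congr rfl fun i _ => Finset.sum_congr rfl fun j _ => ?_
  by_cases hp : p i <;> by_cases hq : q j <;> simp [hp, hq]

lemma sum_ite_ne {α : Type*} [Fintype α] [DecidableEq α] (p : α → Prop) [DecidablePred p]
    (x : α → ℝ) :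
    ∑ i : α, ∑ j : α, (if i ≠ j ∧ (p i ∧ p j) then x i * x j else 0)
      = (∑ i : α, if p i then x i else 0)^2 - ∑ i : α, (if p i then (x i)^2 else 0) := by
  have key : ∀ i j : α, (if i ≠ j ∧ (p i ∧ p j) then x i * x j else 0)
      = (if p i ∧ p j then x i * x j else 0) - (if i = j ∧ p i then x i * x j else 0) := by
    intro i j
    by_cases h : i = j <;> by_cases hp : p i <;> by_cases hq : p j <;> simp_all
  simp only [key, Finset.sum_sub_distrib]
  rw [sum_ite_and_mul, ← sq]
  congr 1
  refine Finset.sum_congr rfl fun i _ => ?_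
  rw [Finset.sum_eq_single i]
  · by_cases hp : p i <;> simp [hp, sq]
  · intro j _ hj; simp [Ne.symm hj]
  · simp

lemma sum_pair {α : Type*} [Fintype α] [DecidableEq α] (a b : α) (hab : a ≠ b) (x : α → ℝ) :
    ∑ i : α, ∑ j : α, (if (i = a ∧ j = b) ∨ (i = b ∧ j = a) then x i * x j else 0)
      = 2 * (x a * x b) := by
  have h1 : ∀ c d : α, ∑ i : α, ∑ j : α, (if i = c ∧ j = d then x i * x j else 0) = x c * x d := by
    intro c d
    rw [Finset.sum_eq_single c]
    · rw [Finset.sum_eq_single d]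
      · simp
      · intro j _ hj; simp [hj]
      · simp
    · intro i _ hi; apply Finset.sum_eq_zero; intro j _; simp [hi]
    · simp
  have key : ∀ i j : α, (if (i = a ∧ j = b) ∨ (i = b ∧ j = a) then x i * x j else 0)
      = (if i = a ∧ j = b then x i * x j else 0) + (if i = b ∧ j = a then x i * x j else 0) := by
    intro i j
    apply ite_or_add
    rintro ⟨⟨rfl, rfl⟩, ⟨h, -⟩⟩; exact hab h
  simp only [key, Finset.sum_add_distrib, h1]
  ring

lemma Mgraph_adj {k n : ℕ} (i j : Fin n) : (Mgraph k n).Adj i j ↔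
    i ≠ j ∧ ((k ≤ i.val ∧ k ≤ j.val) ∨
    (i.val < k ∧ k ≤ j.val ∧ j.val < 2 * k) ∨ (j.val < k ∧ k ≤ i.val ∧ i.val < 2 * k)) :=
  Iff.rfl

instance instDel (k n : ℕ) (a b : Fin n) :
    DecidableRel ((Mgraph k n).deleteEdges {s(a,b)}).Adj := fun i j =>
  decidable_of_iff ((Mgraph k n).Adj i j ∧ ¬ s(i,j) = s(a,b))
    (by rw [SimpleGraph.deleteEdges_adj, Set.mem_singleton_iff])

lemma Gdel_adj {k n : ℕ} (a b i j : Fin n) :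
    ((Mgraph k n).deleteEdges {s(a,b)}).Adj i j ↔
      (Mgraph k n).Adj i j ∧ ¬((i = a ∧ j = b) ∨ (i = b ∧ j = a)) := by
  rw [SimpleGraph.deleteEdges_adj, Set.mem_singleton_iff, Sym2.eq_iff]

lemma card_filter_val {n : ℕ} (p : ℕ → Prop) [DecidablePred p] :
    (univ.filter fun i : Fin n => p i.val).card = ((range n).filter p).card := by
  rw [Finset.card_filter, Finset.card_filter,
    Fin.sum_univ_eq_sum_range (fun v => if p v then 1 else 0)]

lemma card_Ico_val {n a b : ℕ} (hb : b ≤ n) :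
    (univ.filter fun i : Fin n => a ≤ i.val ∧ i.val < b).card = b - a := by
  rw [card_filter_val (fun v => a ≤ v ∧ v < b)]
  have h : (range n).filter (fun v => a ≤ v ∧ v < b) = Ico a b := by
    ext v; simp [mem_Ico, mem_range]; omega
  rw [h, Nat.card_Ico]

lemma card_lt_val {n b : ℕ} (hb : b ≤ n) :
    (univ.filter fun i : Fin n => i.val < b).card = b := by
  rw [card_filter_val (fun v => v < b)]
  have h : (range n).filter (fun v => v < b) = range b := by
    ext v; simp [mem_range]; omega
  rw [h, card_range]

lemma card_le_val {n a : ℕ} :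
    (univ.filter fun i : Fin n => a ≤ i.val).card = n - a := by
  rw [card_filter_val (fun v => a ≤ v)]
  have h : (range n).filter (fun v => a ≤ v) = Ico a n := by
    ext v; simp [mem_Ico, mem_range]; omega
  rw [h, Nat.card_Ico]

lemma deg_lower {k n : ℕ} (hk : 2 ≤ k) (hn : 2*k+1 ≤ n) (a b : Fin n)
    (ha : a.val = k) (hbk : k ≤ b.val) (hb2 : b.val < 2*k ∨ 2*k+2 ≤ n) (hab : a ≠ b)
    (v : Fin n) : k ≤ ((Mgraph k n).deleteEdges {s(a,b)}).degree v := by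
  have hab' : b.val ≠ k := by
    intro h; exact hab (Fin.ext (by rw [ha, h]))
  rw [← SimpleGraph.card_neighborFinset_eq_degree]
  have hmem : ∀ j : Fin n, j ∈ ((Mgraph k n).deleteEdges {s(a,b)}).neighborFinset v ↔
      ((Mgraph k n).deleteEdges {s(a,b)}).Adj v j := fun j =>
    SimpleGraph.mem_neighborFinset _ _ _
  rcases lt_or_ge v.val k with hv | hv
  · -- independent vertex: neighbors ⊇ middle block
    refine le_trans ?_ (Finset.card_le_card (s := univ.filter fun j : Fin n =>
      k ≤ j.val ∧ j.val < 2*k) ?_)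
    · rw [card_Ico_val (by omega)]; omega
    · intro j hj
      simp only [mem_filter, mem_univ, true_and] at hj
      rw [hmem, Gdel_adj, Mgraph_adj]
      refine ⟨⟨?_, ?_⟩, ?_⟩
      · intro h; rw [Fin.ext_iff] at h; omega
      · right; left; exact ⟨hv, hj⟩
      · rintro (⟨rfl, rfl⟩ | ⟨rfl, rfl⟩) <;> omega
  · by_cases hva : v = a
    · subst hva
      refine le_trans ?_ (Finset.card_le_card (s := univ.filter fun j : Fin n =>
        j.val < k) ?_)
      · rw [card_lt_val (by omega)]
      · intro j hj
        simp only [mem_filter, mem_univ, true_and] at hj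
        rw [hmem, Gdel_adj, Mgraph_adj]
        refine ⟨⟨?_, ?_⟩, ?_⟩
        · intro h; rw [Fin.ext_iff] at h; omega
        · right; right; exact ⟨hj, by omega, by omega⟩
        · rintro (⟨-, rfl⟩ | ⟨-, rfl⟩) <;> omega
    · by_cases hvb : v = b
      · rcases hb2 with hb2 | hb2
        · -- b in middle: use independents
          refine le_trans ?_ (Finset.card_le_card (s := univ.filter fun j : Fin n =>
            j.val < k) ?_)
          · rw [card_lt_val (by omega)]
          · intro j hj
            simp only [mem_filter, mem_univ, true_and] at hj
            rw [hmem, Gdel_adj, Mgraph_adj]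
            have hvv : v.val = b.val := by rw [hvb]
            refine ⟨⟨?_, ?_⟩, ?_⟩
            · intro h; rw [Fin.ext_iff] at h; omega
            · right; right; exact ⟨hj, by omega, by omega⟩
            · rintro (⟨rfl, rfl⟩ | ⟨-, rfl⟩) <;> omega
        · -- n ≥ 2k+2: clique minus two
          refine le_trans ?_ (Finset.card_le_card
            (s := ((univ.filter fun j : Fin n => k ≤ j.val).erase b).erase a) ?_)
          · rw [Finset.card_erase_of_mem, Finset.card_erase_of_mem, card_le_val]
            · omega
            · simp only [mem_filter, mem_univ, true_and]; exact hbk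
            · rw [Finset.mem_erase]
              constructor
              · intro h; rw [Fin.ext_iff] at h; omega
              · simp only [mem_filter, mem_univ, true_and]; omega
          · intro j hj
            rw [Finset.mem_erase, Finset.mem_erase, mem_filter] at hj
            obtain ⟨hja, hjb, -, hjk⟩ := hj
            rw [hmem, Gdel_adj, Mgraph_adj]
            have hvv : v.val = b.val := by rw [hvb]
            exact ⟨⟨fun h => hjb (hvb ▸ h.symm), Or.inl ⟨by omega, hjk⟩⟩, by
              rintro (⟨rfl, rfl⟩ | ⟨-, rfl⟩) <;> [omega; exact hja rfl]⟩
      · -- clique vertex not endpoint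
        refine le_trans ?_ (Finset.card_le_card
          (s := (univ.filter fun j : Fin n => k ≤ j.val).erase v) ?_)
        · rw [Finset.card_erase_of_mem, card_le_val]
          · omega
          · simp only [mem_filter, mem_univ, true_and]; exact hv
        · intro j hj
          rw [Finset.mem_erase, mem_filter] at hj
          obtain ⟨hjv, -, hjk⟩ := hj
          rw [hmem, Gdel_adj, Mgraph_adj]
          exact ⟨⟨fun h => hjv h.symm, Or.inl ⟨hv, hjk⟩⟩, by
            rintro (⟨rfl, rfl⟩ | ⟨rfl, rfl⟩) <;> [exact hva rfl; exact hvb rfl]⟩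

lemma Qdel {k n : ℕ} (a b : Fin n) (hab : (Mgraph k n).Adj a b) (x : Fin n → ℝ) :
    ∑ i, ∑ j, (if ((Mgraph k n).deleteEdges {s(a,b)}).Adj i j then x i * x j else 0)
    = (∑ i, ∑ j, (if (Mgraph k n).Adj i j then x i * x j else 0)) - 2*(x a * x b) := by
  have key : ∀ i j : Fin n, (if ((Mgraph k n).deleteEdges {s(a,b)}).Adj i j then x i * x j else 0)
      = (if (Mgraph k n).Adj i j then x i * x j else 0)
        - (if (i = a ∧ j = b) ∨ (i = b ∧ j = a) then x i * x j else 0) := by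
    intro i j
    by_cases hp : (i = a ∧ j = b) ∨ (i = b ∧ j = a)
    · have hM : (Mgraph k n).Adj i j := by
        rcases hp with ⟨rfl, rfl⟩ | ⟨rfl, rfl⟩
        · exact hab
        · exact hab.symm
      have hG : ¬((Mgraph k n).deleteEdges {s(a,b)}).Adj i j := by rw [Gdel_adj]; tauto
      rw [if_pos hp, if_pos hM, if_neg hG]; ring
    · have hiff : ((Mgraph k n).deleteEdges {s(a,b)}).Adj i j ↔ (Mgraph k n).Adj i j := by
        rw [Gdel_adj]; tauto
      rw [if_neg hp]
      by_cases hM : (Mgraph k n).Adj i j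
      · rw [if_pos hM, if_pos (hiff.mpr hM)]; ring
      · rw [if_neg hM, if_neg (fun h => hM (hiff.mp h))]; ring
  simp only [key, Finset.sum_sub_distrib]
  rw [sum_pair a b hab.ne x]

lemma quadForm {n : ℕ} (G : SimpleGraph (Fin n)) [DecidableRel G.Adj] (x : Fin n → ℝ) :
    x ⬝ᵥ (G.adjMatrix ℝ *ᵥ x) = ∑ i, ∑ j, if G.Adj i j then x i * x j else 0 := by
  simp [dotProduct, mulVec, Finset.mul_sum, SimpleGraph.adjMatrix_apply, ite_mul, mul_ite]

lemma QM {k n : ℕ} (x : Fin n → ℝ) :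
    ∑ i, ∑ j, (if (Mgraph k n).Adj i j then x i * x j else 0)
    = (∑ i, if k ≤ i.val then x i else 0)^2 - (∑ i, if k ≤ i.val then (x i)^2 else 0)
      + (∑ i, if i.val < k then x i else 0) * (∑ i, if k ≤ i.val ∧ i.val < 2*k then x i else 0)
      + (∑ i, if k ≤ i.val ∧ i.val < 2*k then x i else 0) * (∑ i, if i.val < k then x i else 0) := by
  have key : ∀ i j : Fin n, (if (Mgraph k n).Adj i j then x i * x j else 0)
      = (if i ≠ j ∧ ((fun v : Fin n => k ≤ v.val) i ∧ (fun v : Fin n => k ≤ v.val) j)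
           then x i * x j else 0)
        + (if (fun v : Fin n => v.val < k) i ∧ (fun v : Fin n => k ≤ v.val ∧ v.val < 2*k) j
           then x i * x j else 0)
        + (if (fun v : Fin n => k ≤ v.val ∧ v.val < 2*k) i ∧ (fun v : Fin n => v.val < k) j
           then x i * x j else 0) := by
    intro i j
    simp only [Mgraph_adj, ne_eq, Fin.ext_iff]
    split_ifs <;> (try ring) <;> (exfalso; omega)
  simp only [key, Finset.sum_add_distrib]
  rw [sum_ite_ne, sum_ite_and_mul, sum_ite_and_mul]

lemma specRad_gt {n : ℕ} (G : SimpleGraph (Fin n)) (c : ℝ) (x : Fin n → ℝ)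
    (h : c * (x ⬝ᵥ x) < x ⬝ᵥ ((@SimpleGraph.adjMatrix ℝ (Fin n) G (Classical.decRel G.Adj) _ _) *ᵥ x)) :
    c < specRad G := by
  unfold specRad
  have key : ∀ (pf : (@SimpleGraph.adjMatrix ℝ (Fin n) G (Classical.decRel G.Adj) _ _).IsHermitian),
      c < ⨆ i, pf.eigenvalues i := by
    intro pf
    have hr := rayleigh _ pf x
    have hx : 0 ≤ x ⬝ᵥ x := Finset.sum_nonneg (fun i _ => mul_self_nonneg _)
    by_contra hc
    push_neg at hc
    have h2 := mul_le_mul_of_nonneg_right hc hx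
    linarith
  apply key

end Stmt15Aux

/-- For `k ≥ 2` and `2k+1 ≤ n ≤ k³/2 + k + 1`, there is a proper spanning
subgraph of `M_k(n)` with minimum degree at least `k` and spectral radius
exceeding `n - k - 1`. -/
theorem stmt_15 (k n : ℕ) (hk : 2 ≤ k) (hn1 : 2 * k + 1 ≤ n)
    (hn2 : (n : ℝ) ≤ (k : ℝ) ^ 3 / 2 + k + 1) :
    ∃ G : SimpleGraph (Fin n), ∃ _ : DecidableRel G.Adj,
      k ≤ G.minDegree ∧ G < Mgraph k n ∧ specRad G > (n : ℝ) - k - 1 := by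
  classical
  open Stmt15Aux Matrix in
  haveI : Nonempty (Fin n) := ⟨⟨0, by omega⟩⟩
  have hkr : (2:ℝ) ≤ (k:ℝ) := by exact_mod_cast hk
  by_cases hcase : n = 2*k+1
  · -- Case A : n = 2k+1, delete the edge {k, k+1}
    set a : Fin n := ⟨k, by omega⟩ with hadef
    set b : Fin n := ⟨k+1, by omega⟩ with hbdef
    have hab : (Mgraph k n).Adj a b := by
      rw [Mgraph_adj]
      constructor
      · intro h; rw [Fin.ext_iff] at h; simp [hadef, hbdef] at h
      · left; constructor <;> simp [hadef, hbdef]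
    refine ⟨(Mgraph k n).deleteEdges {s(a,b)}, instDel k n a b, ?_, ?_, ?_⟩
    · exact SimpleGraph.le_minDegree_of_forall_le_degree _ k
        (fun v => deg_lower hk hn1 a b rfl (by simp [hbdef]; try omega)
          (Or.inl (by simp [hbdef]; try omega)) hab.ne v)
    · refine lt_of_le_of_ne (SimpleGraph.deleteEdges_le _) ?_
      intro h
      have h1 : ¬((Mgraph k n).deleteEdges {s(a,b)}).Adj a b := by rw [Gdel_adj]; tauto
      rw [h] at h1
      exact h1 hab
    · -- spectral bound with the all-ones vector
      have hnk : ((n - k : ℕ) : ℝ) = (k:ℝ) + 1 := by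
        have h' : n - k = k + 1 := by omega
        rw [h']; push_cast; ring
      have hnr : (n:ℝ) = 2*(k:ℝ)+1 := by
        rw [hcase]; push_cast; ring
      rw [gt_iff_lt]
      apply specRad_gt ((Mgraph k n).deleteEdges {s(a,b)}) _ (fun i : Fin n => (1:ℝ))
      rw [show (@SimpleGraph.adjMatrix ℝ (Fin n) ((Mgraph k n).deleteEdges {s(a,b)})
            (Classical.decRel _) _ _)
          = ((Mgraph k n).deleteEdges {s(a,b)}).adjMatrix ℝ by
        ext i j; by_cases hadj : ((Mgraph k n).deleteEdges {s(a,b)}).Adj i j <;> simp [hadj]]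
      rw [quadForm, Qdel a b hab, QM]
      have S1 : (∑ i : Fin n, if (i:ℕ) < k then (1:ℝ) else 0) = (k:ℝ) := by
        refine (Fin.sum_univ_eq_sum_range (fun v => if v < k then (1:ℝ) else 0) n).trans ?_
        rw [sum_range_split3 (le_refl k) (show k ≤ n by omega) _ 1 0 0
          (fun j hj => by rw [if_pos hj]) (fun j h1 h2 => by omega)
          (fun j h1 _ => by rw [if_neg (by omega)])]
        simp
      have S2 : (∑ i : Fin n, if k ≤ (i:ℕ) ∧ (i:ℕ) < 2*k then (1:ℝ) else 0) = (k:ℝ) := by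
        refine (Fin.sum_univ_eq_sum_range
          (fun v => if k ≤ v ∧ v < 2*k then (1:ℝ) else 0) n).trans ?_
        rw [sum_range_split3 (show k ≤ 2*k by omega) (show 2*k ≤ n by omega) _ 0 1 0
          (fun j hj => by rw [if_neg (by omega)]) (fun j h1 h2 => by rw [if_pos ⟨h1, h2⟩])
          (fun j h1 _ => by rw [if_neg (by omega)])]
        have h' : 2*k - k = k := by omega
        rw [h']; simp
      have S3 : (∑ i : Fin n, if k ≤ (i:ℕ) then (1:ℝ) else 0) = ((n - k : ℕ) : ℝ) := by
        refine (Fin.sum_univ_eq_sum_range (fun v => if k ≤ v then (1:ℝ) else 0) n).trans ?_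
        rw [sum_range_split3 (le_refl k) (show k ≤ n by omega) _ 0 0 1
          (fun j hj => by rw [if_neg (by omega)]) (fun j h1 h2 => by omega)
          (fun j h1 _ => by rw [if_pos h1])]
        simp
      have S4 : (∑ i : Fin n, if k ≤ (i:ℕ) then (1:ℝ)^2 else 0) = ((n - k : ℕ) : ℝ) := by
        refine (Fin.sum_univ_eq_sum_range (fun v => if k ≤ v then (1:ℝ)^2 else 0) n).trans ?_
        rw [sum_range_split3 (le_refl k) (show k ≤ n by omega) _ 0 0 1
          (fun j hj => by rw [if_neg (by omega)]) (fun j h1 h2 => by omega)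
          (fun j h1 _ => by rw [if_pos h1]; norm_num)]
        simp
      have S5 : ((fun i : Fin n => (1:ℝ)) ⬝ᵥ (fun i : Fin n => (1:ℝ))) = (n:ℝ) := by
        simp [dotProduct]
      rw [S1, S2, S3, S4, S5, hnk]
      rw [hnr]
      nlinarith [hkr]
  · -- Case B : n ≥ 2k+2, delete the edge {k, n-1}
    have hn2k2 : 2*k+2 ≤ n := by omega
    set m : ℕ := n - k - 1 with hmdef
    have hmr : ((m:ℕ) : ℝ) = (n:ℝ) - k - 1 := by
      have h' : (m:ℕ) + k + 1 = n := by omega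
      have := congrArg (fun t : ℕ => (t:ℝ)) h'
      push_cast at this
      linarith
    have h2m : 2*((m:ℕ):ℝ) ≤ (k:ℝ)^3 := by rw [hmr]; linarith
    have hm1 : (1:ℝ) ≤ ((m:ℕ):ℝ) := by
      have : 1 ≤ m := by omega
      exact_mod_cast this
    set X : ℕ → ℝ := fun v => if v < k then (k:ℝ) else if n-1 ≤ v then ((m:ℕ):ℝ)-1 else ((m:ℕ):ℝ)
      with hX
    set a : Fin n := ⟨k, by omega⟩ with hadef
    set b : Fin n := ⟨n-1, by omega⟩ with hbdef
    have hab : (Mgraph k n).Adj a b := by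
      rw [Mgraph_adj]
      constructor
      · intro h; rw [Fin.ext_iff] at h; simp [hadef, hbdef] at h; omega
      · left; constructor <;> simp [hadef, hbdef] <;> omega
    refine ⟨(Mgraph k n).deleteEdges {s(a,b)}, instDel k n a b, ?_, ?_, ?_⟩
    · exact SimpleGraph.le_minDegree_of_forall_le_degree _ k
        (fun v => deg_lower hk hn1 a b rfl (by simp [hbdef]; try omega)
          (Or.inr hn2k2) hab.ne v)
    · refine lt_of_le_of_ne (SimpleGraph.deleteEdges_le _) ?_
      intro h
      have h1 : ¬((Mgraph k n).deleteEdges {s(a,b)}).Adj a b := by rw [Gdel_adj]; tauto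
      rw [h] at h1
      exact h1 hab
    · rw [gt_iff_lt]
      apply specRad_gt ((Mgraph k n).deleteEdges {s(a,b)}) _ (fun i : Fin n => X i.val)
      rw [show (@SimpleGraph.adjMatrix ℝ (Fin n) ((Mgraph k n).deleteEdges {s(a,b)})
            (Classical.decRel _) _ _)
          = ((Mgraph k n).deleteEdges {s(a,b)}).adjMatrix ℝ by
        ext i j; by_cases hadj : ((Mgraph k n).deleteEdges {s(a,b)}).Adj i j <;> simp [hadj]]
      rw [quadForm, Qdel a b hab, QM]
      have hXa : X a.val = ((m:ℕ):ℝ) := by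
        simp only [hX, hadef]
        rw [if_neg (by omega), if_neg (by omega)]
      have hXb : X b.val = ((m:ℕ):ℝ) - 1 := by
        simp only [hX, hbdef]
        rw [if_neg (by omega), if_pos (by omega)]
      have S1 : (∑ i : Fin n, if (i:ℕ) < k then X i.val else 0) = (k:ℝ) * k := by
        refine (Fin.sum_univ_eq_sum_range (fun v => if v < k then X v else 0) n).trans ?_
        rw [sum_range_split3 (le_refl k) (show k ≤ n by omega) _ (k:ℝ) 0 0
          (fun j hj => by rw [if_pos hj]; simp only [hX]; rw [if_pos hj])
          (fun j h1 h2 => by omega)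
          (fun j h1 _ => by rw [if_neg (by omega)])]
        simp
      have S2 : (∑ i : Fin n, if k ≤ (i:ℕ) ∧ (i:ℕ) < 2*k then X i.val else 0)
          = (k:ℝ) * ((m:ℕ):ℝ) := by
        refine (Fin.sum_univ_eq_sum_range
          (fun v => if k ≤ v ∧ v < 2*k then X v else 0) n).trans ?_
        rw [sum_range_split3 (show k ≤ 2*k by omega) (show 2*k ≤ n by omega) _ 0 ((m:ℕ):ℝ) 0
          (fun j hj => by rw [if_neg (by omega)])
          (fun j h1 h2 => by
            rw [if_pos ⟨h1, h2⟩]; simp only [hX]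
            rw [if_neg (by omega), if_neg (by omega)])
          (fun j h1 _ => by rw [if_neg (by omega)])]
        have h' : 2*k - k = k := by omega
        rw [h']; simp
      have S3 : (∑ i : Fin n, if k ≤ (i:ℕ) then X i.val else 0)
          = ((m:ℕ):ℝ) * ((m:ℕ):ℝ) + (((m:ℕ):ℝ) - 1) := by
        refine (Fin.sum_univ_eq_sum_range (fun v => if k ≤ v then X v else 0) n).trans ?_
        rw [sum_range_split3 (show k ≤ n-1 by omega) (show n-1 ≤ n by omega) _ 0 ((m:ℕ):ℝ)
            (((m:ℕ):ℝ) - 1)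
          (fun j hj => by rw [if_neg (by omega)])
          (fun j h1 h2 => by
            rw [if_pos h1]; simp only [hX]; rw [if_neg (by omega), if_neg (by omega)])
          (fun j h1 h2 => by
            rw [if_pos (by omega)]; simp only [hX]; rw [if_neg (by omega), if_pos h1])]
        have e1 : n - 1 - k = m := by omega
        have e2 : n - (n-1) = 1 := by omega
        rw [e1, e2]; push_cast; ring
      have S4 : (∑ i : Fin n, if k ≤ (i:ℕ) then (X i.val)^2 else 0)
          = ((m:ℕ):ℝ) * ((m:ℕ):ℝ)^2 + (((m:ℕ):ℝ) - 1)^2 := by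
        refine (Fin.sum_univ_eq_sum_range (fun v => if k ≤ v then (X v)^2 else 0) n).trans ?_
        rw [sum_range_split3 (show k ≤ n-1 by omega) (show n-1 ≤ n by omega) _ 0 (((m:ℕ):ℝ)^2)
            ((((m:ℕ):ℝ) - 1)^2)
          (fun j hj => by rw [if_neg (by omega)])
          (fun j h1 h2 => by
            rw [if_pos h1]; simp only [hX]; rw [if_neg (by omega), if_neg (by omega)])
          (fun j h1 h2 => by
            rw [if_pos (by omega)]; simp only [hX]; rw [if_neg (by omega), if_pos h1])]
        have e1 : n - 1 - k = m := by omega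
        have e2 : n - (n-1) = 1 := by omega
        rw [e1, e2]; push_cast; ring
      have S5 : ((fun i : Fin n => X i.val) ⬝ᵥ (fun i : Fin n => X i.val))
          = (k:ℝ) * ((k:ℝ)*(k:ℝ)) + ((m:ℕ):ℝ) * (((m:ℕ):ℝ)*((m:ℕ):ℝ))
            + ((((m:ℕ):ℝ)-1)*(((m:ℕ):ℝ)-1)) := by
        show (∑ i : Fin n, X i.val * X i.val) = _
        refine (Fin.sum_univ_eq_sum_range (fun v => X v * X v) n).trans ?_
        rw [sum_range_split3 (show k ≤ n-1 by omega) (show n-1 ≤ n by omega) _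
            ((k:ℝ)*(k:ℝ)) (((m:ℕ):ℝ)*((m:ℕ):ℝ)) ((((m:ℕ):ℝ)-1)*(((m:ℕ):ℝ)-1))
          (fun j hj => by simp only [hX]; rw [if_pos hj])
          (fun j h1 h2 => by
            simp only [hX]; rw [if_neg (by omega), if_neg (by omega)])
          (fun j h1 h2 => by
            simp only [hX]; rw [if_neg (by omega), if_pos h1])]
        have e1 : n - 1 - k = m := by omega
        have e2 : n - (n-1) = 1 := by omega
        rw [e1, e2]; push_cast; ring
      rw [S1, S2, S3, S4, S5, hXa, hXb]
      rw [show (n:ℝ) - (k:ℝ) - 1 = ((m:ℕ):ℝ) from hmr.symm]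
      have hpos : (0:ℝ) < ((m:ℕ):ℝ) * ((k:ℝ)^3 - 2*((m:ℕ):ℝ) + 1) :=
        mul_pos (by linarith) (by linarith)
      nlinarith [hpos]
end

section
/- Let G be the graph obtained from M_k(n) by deleting a single edge both of whose endpoints lie outside the independent set of k vertices of degree k (i.e., both endpoints lie in the clique K_{n-k}). If 2k+1 ≤ n ≤ k³/2 + k + 1 and k ≥ 2, then λ(G) ≥ n - k - 1. -/
open SimpleGraph Finset

open Matrix

theorem rayleigh_le' {n : ℕ} [NeZero n] (A : Matrix (Fin n) (Fin n) ℝ) (hA : A.IsHermitian) (v : Fin n → ℝ) :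
    v ⬝ᵥ (A *ᵥ v) ≤ (⨆ i, hA.eigenvalues i) * (v ⬝ᵥ v) := by
  classical
  set U : Matrix (Fin n) (Fin n) ℝ := (hA.eigenvectorUnitary : Matrix (Fin n) (Fin n) ℝ) with hU
  set w : Fin n → ℝ := Uᵀ *ᵥ v with hw
  have hstar : star U = Uᵀ := by
    rw [← Matrix.conjTranspose_eq_transpose_of_trivial]; rfl
  have hUU : U * Uᵀ = 1 := by
    rw [← hstar]; exact (Matrix.mem_unitaryGroup_iff).mp hA.eigenvectorUnitary.2
  have hdotU : ∀ z : Fin n → ℝ, v ⬝ᵥ (U *ᵥ z) = w ⬝ᵥ z := by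
    intro z
    rw [Matrix.dotProduct_mulVec, hw, Matrix.mulVec_transpose]
  have key : v ⬝ᵥ (A *ᵥ v) = ∑ i, hA.eigenvalues i * (w i)^2 := by
    conv_lhs => rw [hA.spectral_theorem, Unitary.conjStarAlgAut_apply, hstar]
    rw [← Matrix.mulVec_mulVec, ← Matrix.mulVec_mulVec, hdotU, ← hw]
    simp only [dotProduct, Matrix.mulVec_diagonal]
    apply Finset.sum_congr rfl
    intro i _
    simp [Function.comp]
    ring
  have hnorm : v ⬝ᵥ v = ∑ i, (w i)^2 := by
    have hUw : U *ᵥ w = v := by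
      rw [hw, Matrix.mulVec_mulVec, hUU, Matrix.one_mulVec]
    have h1 : v ⬝ᵥ v = w ⬝ᵥ w := by
      calc v ⬝ᵥ v = v ⬝ᵥ (U *ᵥ w) := by rw [hUw]
        _ = w ⬝ᵥ w := hdotU w
    rw [h1, dotProduct]
    exact Finset.sum_congr rfl fun i _ => (sq (w i)).symm
  rw [key, hnorm, Finset.mul_sum]
  apply Finset.sum_le_sum
  intro i _
  exact mul_le_mul_of_nonneg_right
    (le_ciSup (Set.Finite.bddAbove (Set.finite_range _)) i) (sq_nonneg _)

theorem specRad_ge' {n : ℕ} [NeZero n] (G : SimpleGraph (Fin n)) (v : Fin n → ℝ) (c : ℝ)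
    (hv : 0 < v ⬝ᵥ v)
    (h : c * (v ⬝ᵥ v) ≤ v ⬝ᵥ ((@SimpleGraph.adjMatrix ℝ (Fin n) G (Classical.decRel _) _ _) *ᵥ v)) :
    c ≤ specRad G := by
  letI := Classical.decRel G.Adj
  have hH : (G.adjMatrix ℝ).IsHermitian := by
    rw [Matrix.IsHermitian, Matrix.conjTranspose_eq_transpose_of_trivial]
    exact G.isSymm_adjMatrix
  unfold specRad
  have h2 := rayleigh_le' _ hH v
  have := h.trans h2
  exact le_of_mul_le_mul_right this hv

section helpers
variable {n : ℕ}

lemma card_filt_lt (b : ℕ) (h : b < n) :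
    ((univ : Finset (Fin n)).filter fun i => i.val < b).card = b := by
  have : ((univ : Finset (Fin n)).filter fun i => i.val < b) = Iio ⟨b, h⟩ := by
    ext i; simp [Fin.lt_def]
  rw [this, Fin.card_Iio]

lemma card_filt_not_lt (b : ℕ) (h : b < n) :
    ((univ : Finset (Fin n)).filter fun i => ¬ i.val < b).card = n - b := by
  have := Finset.card_filter_add_card_filter_not
    (s := (univ : Finset (Fin n))) (p := fun i => i.val < b)
  rw [card_filt_lt b h, card_univ, Fintype.card_fin] at this
  omega

lemma card_filt_ico (a b : ℕ) (h : b < n) (hab : a ≤ b) :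
    ((univ : Finset (Fin n)).filter fun i => a ≤ i.val ∧ i.val < b).card = b - a := by
  have : ((univ : Finset (Fin n)).filter fun i => a ≤ i.val ∧ i.val < b)
      = Ico ⟨a, lt_of_le_of_lt hab h⟩ ⟨b, h⟩ := by
    ext i; simp [Fin.lt_def, Fin.le_def]
  rw [this, Fin.card_Ico]

end helpers

/-- Deleting from `M_k(n)` a single edge with both endpoints in the clique
`K_{n-k}` leaves a graph of spectral radius at least `n - k - 1`, provided
`k ≥ 2` and `2k + 1 ≤ n ≤ k³/2 + k + 1`. -/
theorem stmt_18 (k n : ℕ) (hk : 2 ≤ k) (hn1 : 2 * k + 1 ≤ n)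
    (hn2 : (n : ℝ) ≤ (k : ℝ) ^ 3 / 2 + k + 1)
    (u v : Fin n) (hu : k ≤ u.val) (hv : k ≤ v.val) (hadj : (Mgraph k n).Adj u v) :
    specRad ((Mgraph k n).deleteEdges {s(u, v)}) ≥ (n : ℝ) - k - 1 := by
  classical
  have hn0 : 0 < n := by omega
  haveI : NeZero n := ⟨hn0.ne'⟩
  set G := (Mgraph k n).deleteEdges {s(u, v)} with hG
  have huv : u ≠ v := hadj.ne
  have hkn : k < n := by omega
  have h2kn : 2 * k < n := by omega
  have hGadj : ∀ i j : Fin n, G.Adj i j ↔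
      ((i ≠ j ∧ ((k ≤ i.val ∧ k ≤ j.val) ∨
        (i.val < k ∧ k ≤ j.val ∧ j.val < 2 * k) ∨ (j.val < k ∧ k ≤ i.val ∧ i.val < 2 * k)))
      ∧ ¬((i = u ∧ j = v) ∨ (i = v ∧ j = u))) := by
    intro i j
    rw [hG, SimpleGraph.deleteEdges_adj]
    simp only [Set.mem_singleton_iff, Sym2.eq_iff]
    rfl
  set K : ℝ := (k : ℝ) with hK
  have hK2 : (2:ℝ) ≤ K := by rw [hK]; exact_mod_cast hk
  have hK0 : (0:ℝ) < K := by linarith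
  set x : ℝ := 2 / K^2 with hxdef
  have hx0 : 0 < x := by positivity
  set w : Fin n → ℝ := fun i => if i.val < k then x else 1 with hwdef
  set S1 := (univ : Finset (Fin n)).filter (fun i => i.val < k) with hS1
  set S2 := (univ : Finset (Fin n)).filter (fun i => ¬ i.val < k) with hS2
  have hcard1 : S1.card = k := card_filt_lt k hkn
  have hcard2 : S2.card = n - k := card_filt_not_lt k hkn
  have huS2 : u ∈ S2 := by rw [hS2]; simp; omega
  have hvS2 : v ∈ S2 := by rw [hS2]; simp; omega
  -- the norm
  have hnorm : w ⬝ᵥ w = K * x^2 + ((n:ℝ) - K) := by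
    rw [dotProduct, ← Finset.sum_filter_add_sum_filter_not univ (fun i => i.val < k)]
    rw [← hS1, ← hS2]
    have e1 : ∑ i ∈ S1, w i * w i = K * x^2 := by
      have h1 : ∀ i ∈ S1, w i * w i = x^2 := by
        intro i hi
        rw [hS1, mem_filter] at hi
        show (if (i:ℕ) < k then x else 1) * (if (i:ℕ) < k then x else 1) = x^2
        rw [if_pos hi.2]; ring
      rw [Finset.sum_congr rfl h1, Finset.sum_const, hcard1, nsmul_eq_mul]
    have e2 : ∑ i ∈ S2, w i * w i = (n:ℝ) - K := by
      have h1 : ∀ i ∈ S2, w i * w i = 1 := by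
        intro i hi
        rw [hS2, mem_filter] at hi
        show (if (i:ℕ) < k then x else 1) * (if (i:ℕ) < k then x else 1) = 1
        rw [if_neg hi.2]; ring
      rw [Finset.sum_congr rfl h1, Finset.sum_const, hcard2, nsmul_eq_mul, mul_one,
        hK]
      push_cast [Nat.cast_sub hkn.le]
      ring
    rw [e1, e2]
  have hnormpos : 0 < w ⬝ᵥ w := by
    rw [hnorm]
    have h1 : (0:ℝ) < (n:ℝ) - K := by
      rw [hK]; push_cast
      have : (2*k+1 : ℝ) ≤ (n:ℝ) := by exact_mod_cast hn1
      linarith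
    nlinarith
  rw [ge_iff_le, hG]
  apply specRad_ge' _ w _ hnormpos
  rw [← hG]
  -- reduce to double sum
  have hQ : w ⬝ᵥ ((@SimpleGraph.adjMatrix ℝ (Fin n) G (Classical.decRel _) _ _) *ᵥ w)
      = ∑ i, ∑ j, (if G.Adj i j then w i * w j else 0) := by
    simp only [dotProduct, Matrix.mulVec, SimpleGraph.adjMatrix_apply]
    rw [Finset.sum_congr rfl (fun i _ => ?_)]
    rw [Finset.mul_sum]
    refine Finset.sum_congr rfl (fun j _ => ?_)
    split_ifs <;> ring
  rw [hQ]
  -- row sums for independent vertices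
  have hrow1 : ∀ i ∈ S1, ∑ j, (if G.Adj i j then w i * w j else 0) = x * K := by
    intro i hi
    rw [hS1, mem_filter] at hi
    have hik : i.val < k := hi.2
    have hptw : ∀ j : Fin n, (if G.Adj i j then w i * w j else 0)
        = (if k ≤ j.val ∧ j.val < 2*k then x else 0) := by
      intro j
      by_cases hj : k ≤ j.val ∧ j.val < 2*k
      · rw [if_pos hj, if_pos]
        · show (if (i:ℕ) < k then x else 1) * (if (j:ℕ) < k then x else 1) = x
          rw [if_pos hik, if_neg (by omega)]; ring
        · rw [hGadj]
          refine ⟨⟨fun h => ?_, Or.inr (Or.inl ⟨hik, hj⟩)⟩, ?_⟩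
          · have := congrArg Fin.val h; omega
          · rintro (⟨hiu, -⟩ | ⟨hiv, -⟩)
            · have := congrArg Fin.val hiu; omega
            · have := congrArg Fin.val hiv; omega
      · rw [if_neg hj, if_neg]
        rw [hGadj]
        rintro ⟨⟨hne, hor⟩, -⟩
        rcases hor with ⟨h1, -⟩ | ⟨-, h2⟩ | ⟨-, h3, -⟩ <;> omega
    rw [Finset.sum_congr rfl (fun j _ => hptw j), ← Finset.sum_filter,
      Finset.sum_const, card_filt_ico k (2*k) h2kn (by omega), nsmul_eq_mul]
    have : 2*k - k = k := by omega
    rw [this, hK]; ring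
  -- row sums for clique vertices
  have hrow2 : ∀ i ∈ S2, ∑ j, (if G.Adj i j then w i * w j else 0)
      = (if i.val < 2*k then K*x else 0) + ((n:ℝ) - K - 1)
        - (if i = u ∨ i = v then 1 else 0) := by
    intro i hi
    rw [hS2, mem_filter] at hi
    have hik : ¬ i.val < k := hi.2
    rw [← Finset.sum_filter_add_sum_filter_not univ (fun j => j.val < k), ← hS1, ← hS2]
    have part1 : ∑ j ∈ S1, (if G.Adj i j then w i * w j else 0)
        = (if i.val < 2*k then K*x else 0) := by
      have hptw : ∀ j ∈ S1, (if G.Adj i j then w i * w j else 0)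
          = (if i.val < 2*k then x else 0) := by
        intro j hj
        rw [hS1, mem_filter] at hj
        have hjk : j.val < k := hj.2
        by_cases hi2 : i.val < 2*k
        · rw [if_pos hi2, if_pos]
          · show (if (i:ℕ) < k then x else 1) * (if (j:ℕ) < k then x else 1) = x
            rw [if_neg hik, if_pos hjk]; ring
          · rw [hGadj]
            refine ⟨⟨fun h => ?_, Or.inr (Or.inr ⟨hjk, by omega, hi2⟩)⟩, ?_⟩
            · have := congrArg Fin.val h; omega
            · rintro (⟨-, hjv⟩ | ⟨-, hju⟩)
              · have := congrArg Fin.val hjv; omega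
              · have := congrArg Fin.val hju; omega
        · rw [if_neg hi2, if_neg]
          rw [hGadj]
          rintro ⟨⟨hne, hor⟩, -⟩
          rcases hor with ⟨-, h1⟩ | ⟨h1, -⟩ | ⟨-, -, h3⟩ <;> omega
      rw [Finset.sum_congr rfl hptw, Finset.sum_const, hcard1, nsmul_eq_mul,
        mul_ite, mul_zero, hK]
    have part2 : ∑ j ∈ S2, (if G.Adj i j then w i * w j else 0)
        = ((n:ℝ) - K - 1) - (if i = u ∨ i = v then 1 else 0) := by
      have hptw : ∀ j ∈ S2, (if G.Adj i j then w i * w j else 0)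
          = (if j = i then (0:ℝ) else 1)
            - (if (i = u ∧ j = v) ∨ (i = v ∧ j = u) then (1:ℝ) else 0) := by
        intro j hj
        rw [hS2, mem_filter] at hj
        have hjk : ¬ j.val < k := hj.2
        have hw1 : w i * w j = 1 := by
          show (if (i:ℕ) < k then x else 1) * (if (j:ℕ) < k then x else 1) = 1
          rw [if_neg hik, if_neg hjk]; ring
        by_cases hji : j = i
        · subst hji
          rw [if_neg (G.irrefl ∘ (fun h => h)), if_pos rfl, if_neg, sub_zero]
          rintro (⟨h1, h2⟩ | ⟨h1, h2⟩)
          · exact huv (h1.symm.trans h2)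
          · exact huv (h2.symm.trans h1)
        · by_cases hdel : (i = u ∧ j = v) ∨ (i = v ∧ j = u)
          · rw [if_neg, if_neg hji, if_pos hdel]
            · norm_num
            · rw [hGadj]; rintro ⟨-, hnd⟩; exact hnd hdel
          · rw [if_pos, if_neg hji, if_neg hdel, hw1]
            · norm_num
            · rw [hGadj]
              exact ⟨⟨fun h => hji h.symm, Or.inl ⟨by omega, by omega⟩⟩, hdel⟩
      rw [Finset.sum_congr rfl hptw, Finset.sum_sub_distrib]
      have e1 : ∑ j ∈ S2, (if j = i then (0:ℝ) else 1) = ((n:ℝ) - K - 1) := by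
        have : ∀ j ∈ S2, (if j = i then (0:ℝ) else 1)
            = 1 - (if j = i then (1:ℝ) else 0) := by
          intro j _; split_ifs <;> ring
        rw [Finset.sum_congr rfl this, Finset.sum_sub_distrib, Finset.sum_const,
          hcard2, Finset.sum_ite_eq' S2 i (fun _ => (1:ℝ)),
          if_pos (by rw [hS2, mem_filter]; exact ⟨mem_univ i, hik⟩), nsmul_eq_mul,
          mul_one, hK]
        push_cast [Nat.cast_sub hkn.le]
        ring
      have e2 : ∑ j ∈ S2, (if (i = u ∧ j = v) ∨ (i = v ∧ j = u) then (1:ℝ) else 0)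
          = (if i = u ∨ i = v then 1 else 0) := by
        by_cases hiu : i = u
        · have : ∀ j ∈ S2, (if (i = u ∧ j = v) ∨ (i = v ∧ j = u) then (1:ℝ) else 0)
              = (if j = v then (1:ℝ) else 0) := by
            intro j _
            by_cases hjv : j = v
            · rw [if_pos (Or.inl ⟨hiu, hjv⟩), if_pos hjv]
            · rw [if_neg, if_neg hjv]
              rintro (⟨-, h⟩ | ⟨h, -⟩)
              · exact hjv h
              · exact huv (hiu.symm.trans h)
          rw [Finset.sum_congr rfl this, Finset.sum_ite_eq' S2 v (fun _ => (1:ℝ)),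
            if_pos hvS2, if_pos (Or.inl hiu)]
        · by_cases hiv : i = v
          · have : ∀ j ∈ S2, (if (i = u ∧ j = v) ∨ (i = v ∧ j = u) then (1:ℝ) else 0)
                = (if j = u then (1:ℝ) else 0) := by
              intro j _
              by_cases hju : j = u
              · rw [if_pos (Or.inr ⟨hiv, hju⟩), if_pos hju]
              · rw [if_neg, if_neg hju]
                rintro (⟨h, -⟩ | ⟨-, h⟩)
                · exact huv (h.symm.trans hiv)
                · exact hju h
            rw [Finset.sum_congr rfl this, Finset.sum_ite_eq' S2 u (fun _ => (1:ℝ)),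
              if_pos huS2, if_pos (Or.inr hiv)]
          · have : ∀ j ∈ S2, (if (i = u ∧ j = v) ∨ (i = v ∧ j = u) then (1:ℝ) else 0)
                = 0 := by
              intro j _
              rw [if_neg]
              rintro (⟨h, -⟩ | ⟨h, -⟩)
              · exact hiu h
              · exact hiv h
            rw [Finset.sum_congr rfl this, Finset.sum_const, smul_zero,
              if_neg (by tauto)]
      rw [e1, e2]
    rw [part1, part2]
    ring
  -- total
  have hkey : ∑ i, ∑ j, (if G.Adj i j then w i * w j else 0)
      = K*(x*K) + (K*(K*x) + ((n:ℝ)-K)*((n:ℝ)-K-1) - 2) := by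
    rw [← Finset.sum_filter_add_sum_filter_not univ (fun i => i.val < k), ← hS1, ← hS2]
    have t1 : ∑ i ∈ S1, ∑ j, (if G.Adj i j then w i * w j else 0) = K*(x*K) := by
      rw [Finset.sum_congr rfl hrow1, Finset.sum_const, hcard1, nsmul_eq_mul, hK]
    have t2 : ∑ i ∈ S2, ∑ j, (if G.Adj i j then w i * w j else 0)
        = K*(K*x) + ((n:ℝ)-K)*((n:ℝ)-K-1) - 2 := by
      rw [Finset.sum_congr rfl hrow2]
      rw [Finset.sum_sub_distrib, Finset.sum_add_distrib]
      have s1 : ∑ i ∈ S2, (if i.val < 2*k then K*x else 0) = K*(K*x) := by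
        rw [← Finset.sum_filter]
        have : S2.filter (fun i => i.val < 2*k)
            = (univ : Finset (Fin n)).filter (fun i => k ≤ i.val ∧ i.val < 2*k) := by
          rw [hS2, Finset.filter_filter]
          ext i; simp
        rw [this, Finset.sum_const, card_filt_ico k (2*k) h2kn (by omega), nsmul_eq_mul]
        have h2 : 2*k - k = k := by omega
        rw [h2, hK]
      have s2 : ∑ _i ∈ S2, ((n:ℝ) - K - 1) = ((n:ℝ)-K)*((n:ℝ)-K-1) := by
        rw [Finset.sum_const, hcard2, nsmul_eq_mul, hK]
        push_cast [Nat.cast_sub hkn.le]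
        ring
      have s3 : ∑ i ∈ S2, (if i = u ∨ i = v then (1:ℝ) else 0) = 2 := by
        have : ∀ i ∈ S2, (if i = u ∨ i = v then (1:ℝ) else 0)
            = (if i = u then (1:ℝ) else 0) + (if i = v then (1:ℝ) else 0) := by
          intro i _
          by_cases h1 : i = u <;> by_cases h2 : i = v
          · exact absurd (h1.symm.trans h2) huv
          · simp [h1, h2, huv, Ne.symm huv]
          · simp [h1, h2, huv, Ne.symm huv]
          · simp [h1, h2, huv, Ne.symm huv]
        rw [Finset.sum_congr rfl this, Finset.sum_add_distrib,
          Finset.sum_ite_eq' S2 u (fun _ => (1:ℝ)), Finset.sum_ite_eq' S2 v (fun _ => (1:ℝ)),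
          if_pos huS2, if_pos hvS2]
        norm_num
      rw [s1, s2, s3]
    rw [t1, t2]
  rw [hkey, hnorm]
  -- final arithmetic
  have hmain : ((n:ℝ) - K - 1) * K * x^2 ≤ 2*K^2*x - 2 := by
    rw [hxdef]
    have hK3 : (0:ℝ) < K^3 := by positivity
    have hKne : K ≠ 0 := ne_of_gt hK0
    have e1 : 2*K^2*(2/K^2) - 2 = 2 := by field_simp; ring
    have e2 : ((n:ℝ) - K - 1)*K*(2/K^2)^2 = 4*((n:ℝ)-K-1)/K^3 := by
      field_simp
      ring
    rw [e1, e2, div_le_iff₀ hK3]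
    nlinarith [hn2]
  nlinarith [hmain]
end
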